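/- For a single unordered character on a rooted tree with labelled leaves, the set of states achieving the minimum conditional subtree cost at an internal node u with children of upper sets VU(v1),…,VU(vd) is exactly {A : k(A) = K}, where k(A) = |{i : A ∈ VU(vi)}| and K = max_A k(A); moreover the states achieving cost exactly one more than the minimum (among states not in the upper set) include exactly {A : k(A) = K − 1}. -/

import Mathlib

open scoped Classical

/-- Rooted trees with leaves labelled by states from `S`. -/
inductive RTree (S : Type) where
  | leaf : S → RTree S
  | node : List (RTree S) → RTree S

/-- The conditional MP-cost of the subtree `t` given that its root receives
state `A` (⊤ means infeasible, i.e. a leaf forced to a different label):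
the minimum number of differing-endpoint edges over assignments extending the
leaf labels with the root fixed to `A`. -/
noncomputable def condCost {S : Type} : RTree S → S → ℕ∞
  | .leaf s, A => if A = s then 0 else ⊤
  | .node ts, A =>
      (ts.attach.map (fun t => ⨅ B : S, (condCost t.1 B + if A = B then 0 else 1))).sum
  decreasing_by
    simp_wf
    have := List.sizeOf_lt_of_mem t.2
    omega

/-- The (unconditional) MP-cost of the subtree `t`. -/
noncomputable def subMP {S : Type} (t : RTree S) : ℕ∞ := ⨅ A : S, condCost t A

/-- The upper set `VU(t)`: states achieving the minimum conditional cost. -/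
noncomputable def upperSet {S : Type} (t : RTree S) : Set S :=
  {A | condCost t A = subMP t}

/-- `k(A)`: the number of children whose upper set contains `A`. -/
noncomputable def kCount {S : Type} (ts : List (RTree S)) (A : S) : ℕ :=
  (ts.map (fun t => if A ∈ upperSet t then 1 else 0)).sum

section Helpers

variable {S : Type} [Fintype S] [Nonempty S]

lemma exists_eq_iInf (f : S → ℕ∞) : ∃ B, f B = ⨅ C, f C := by
  obtain ⟨b, hb⟩ := Finite.exists_min f
  exact ⟨b, le_antisymm (le_iInf hb) (iInf_le f b)⟩

lemma subMP_le (t : RTree S) (A : S) : subMP t ≤ condCost t A := iInf_le _ _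

lemma exists_mem_upperSet (t : RTree S) : ∃ A, A ∈ upperSet t := exists_eq_iInf _

lemma list_sum_ne_top {l : List ℕ∞} (h : ∀ x ∈ l, x ≠ ⊤) : l.sum ≠ ⊤ := by
  induction l with
  | nil => simp
  | cons a l ih =>
      rw [List.sum_cons]
      exact WithTop.add_ne_top.2 ⟨h a (List.mem_cons_self),
        ih fun x hx => h x (List.mem_cons_of_mem a hx)⟩

lemma list_sum_map_add (l : List (RTree S)) (f g : RTree S → ℕ∞) :
    (l.map (fun x => f x + g x)).sum = (l.map f).sum + (l.map g).sum := by
  induction l with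
  | nil => simp
  | cons a l ih => simp [ih, add_add_add_comm]

theorem subMP_ne_top : ∀ t : RTree S, subMP t ≠ ⊤
  | .leaf s => by
      intro h
      have h0 : condCost (RTree.leaf s) s = 0 := by simp [condCost]
      have h2 := subMP_le (RTree.leaf s) s
      rw [h, h0] at h2
      simp at h2
  | .node ts => by
      intro h
      have A : S := Classical.arbitrary S
      have h2 := subMP_le (RTree.node ts) A
      rw [h] at h2
      have h3 : condCost (RTree.node ts) A ≠ ⊤ := by
        rw [condCost]
        apply list_sum_ne_top
        intro x hx
        simp only [List.mem_map] at hx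
        obtain ⟨t, ht, rfl⟩ := hx
        obtain ⟨B₀, hB₀⟩ := exists_eq_iInf (condCost t.1)
        have h1 : (⨅ B : S, (condCost t.1 B + if A = B then 0 else 1)) ≤
            condCost t.1 B₀ + 1 := by
          refine le_trans (iInf_le _ B₀) ?_
          gcongr
          split <;> simp
        have hne := subMP_ne_top t.1
        intro htop
        rw [htop] at h1
        have : condCost t.1 B₀ + 1 = ⊤ := top_le_iff.1 h1
        rw [hB₀] at this
        exact (WithTop.add_ne_top.2 ⟨hne, by exact ENat.one_ne_top⟩) this
      exact h3 (top_le_iff.1 h2)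
  decreasing_by
    simp_wf
    have := List.sizeOf_lt_of_mem t.2
    omega

lemma iInf_cost_eq (t : RTree S) (A : S) :
    (⨅ B : S, (condCost t B + if A = B then 0 else 1)) =
      subMP t + (if A ∈ upperSet t then 0 else 1) := by
  by_cases h : A ∈ upperSet t
  · have hA : condCost t A = subMP t := h
    rw [if_pos h, add_zero]
    refine le_antisymm ?_ ?_
    · refine le_trans (iInf_le _ A) ?_
      simp [hA]
    · exact le_iInf fun B => le_trans (subMP_le t B) (le_add_of_nonneg_right (by positivity))
  · have hne : condCost t A ≠ subMP t := h
    have hlt : subMP t < condCost t A := lt_of_le_of_ne (subMP_le t A) (Ne.symm hne)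
    have h1 : subMP t + 1 ≤ condCost t A := (ENat.add_one_le_iff (subMP_ne_top t)).2 hlt
    rw [if_neg h]
    refine le_antisymm ?_ ?_
    · obtain ⟨B₀, hB₀⟩ := exists_mem_upperSet t
      have hAB : A ≠ B₀ := fun hAB => h (hAB ▸ hB₀)
      refine le_trans (iInf_le _ B₀) ?_
      rw [if_neg hAB, (show condCost t B₀ = subMP t from hB₀)]
    · refine le_iInf fun B => ?_
      by_cases hAB : A = B
      · subst hAB
        simpa using h1
      · rw [if_neg hAB]
        gcongr
        exact subMP_le t B

/-- complement count -/
noncomputable def cCount (ts : List (RTree S)) (A : S) : ℕ :=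
  (ts.map (fun t => if A ∈ upperSet t then 0 else 1)).sum

lemma cCount_add_kCount (ts : List (RTree S)) (A : S) :
    cCount ts A + kCount ts A = ts.length := by
  induction ts with
  | nil => simp [cCount, kCount]
  | cons a l ih =>
      simp only [cCount, kCount, List.map_cons, List.sum_cons, List.length_cons] at *
      split <;> omega

lemma condCost_node (ts : List (RTree S)) (A : S) :
    condCost (RTree.node ts) A = (ts.map subMP).sum + (cCount ts A : ℕ∞) := by
  rw [condCost]
  have h1 : ts.attach.map (fun t => ⨅ B : S, (condCost t.1 B + if A = B then 0 else 1)) =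
      ts.map (fun t => ⨅ B : S, (condCost t B + if A = B then 0 else 1)) :=
    List.attach_map_val (l := ts) (f := fun t => ⨅ B : S, (condCost t B + if A = B then 0 else 1))
  rw [h1]
  have h2 : ts.map (fun t => ⨅ B : S, (condCost t B + if A = B then 0 else 1)) =
      ts.map (fun t => subMP t + (if A ∈ upperSet t then 0 else 1)) :=
    List.map_congr_left fun t _ => iInf_cost_eq t A
  rw [h2, list_sum_map_add]
  congr 1
  rw [cCount, Nat.cast_list_sum, List.map_map]
  refine congrArg List.sum (List.map_congr_left fun t _ => ?_)
  simp only [Function.comp_apply]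
  split <;> simp

lemma M_ne_top (ts : List (RTree S)) : (ts.map subMP).sum ≠ ⊤ := by
  apply list_sum_ne_top
  intro x hx
  simp only [List.mem_map] at hx
  obtain ⟨t, ht, rfl⟩ := hx
  exact subMP_ne_top t

end Helpers

/-- Hartigan's characterization of the optimal and next-to-optimal state sets
at an internal node with children `ts`: the upper set is `{A | k(A) = K}`, and
the states outside the upper set achieving cost exactly one more than the
minimum are exactly `{A | k(A) = K - 1}`. -/
theorem hartigan_upper_lower_sets {S : Type} [Fintype S] [Nonempty S]
    (ts : List (RTree S)) (hts : ts ≠ []) :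
    upperSet (RTree.node ts) =
      {A | kCount ts A = Finset.univ.sup (fun B : S => kCount ts B)} ∧
    {A | A ∉ upperSet (RTree.node ts) ∧
        condCost (RTree.node ts) A = subMP (RTree.node ts) + 1} =
      {A | kCount ts A = Finset.univ.sup (fun B : S => kCount ts B) - 1} := by
  set M : ℕ∞ := (ts.map subMP).sum with hM
  set K : ℕ := Finset.univ.sup (fun B : S => kCount ts B) with hK
  set n : ℕ := ts.length with hn
  have hMne : M ≠ ⊤ := M_ne_top ts
  have hck : ∀ A : S, cCount ts A + kCount ts A = n := fun A => cCount_add_kCount ts A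
  have hk_le : ∀ A : S, kCount ts A ≤ n := fun A => by have := hck A; omega
  have hK_le : K ≤ n := Finset.sup_le fun A _ => hk_le A
  obtain ⟨Astar, _, hAstar⟩ := Finset.exists_mem_eq_sup Finset.univ
    Finset.univ_nonempty (fun B : S => kCount ts B)
  have hk_le_K : ∀ A : S, kCount ts A ≤ K := fun A =>
    Finset.le_sup (f := fun B : S => kCount ts B) (Finset.mem_univ A)
  have hK1 : 1 ≤ K := by
    obtain ⟨t₀, rest, rfl⟩ := List.exists_cons_of_ne_nil hts
    obtain ⟨A₀, hA₀⟩ := exists_mem_upperSet t₀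
    have : 1 ≤ kCount (t₀ :: rest) A₀ := by
      simp only [kCount, List.map_cons, List.sum_cons, if_pos hA₀]
      omega
    exact le_trans this (hk_le_K A₀)
  -- subMP of the node
  have hsub : subMP (RTree.node ts) = M + ((n - K : ℕ) : ℕ∞) := by
    refine le_antisymm ?_ ?_
    · refine le_trans (subMP_le _ Astar) ?_
      rw [condCost_node]
      have : cCount ts Astar = n - K := by have := hck Astar; omega
      rw [this]
    · refine le_iInf fun A => ?_
      rw [condCost_node]
      gcongr
      have := hck A; have := hk_le_K A; omega
  have hcost : ∀ A : S, condCost (RTree.node ts) A = M + (cCount ts A : ℕ∞) :=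
    fun A => condCost_node ts A
  have hup : ∀ A : S, A ∈ upperSet (RTree.node ts) ↔ kCount ts A = K := by
    intro A
    have : A ∈ upperSet (RTree.node ts) ↔
        condCost (RTree.node ts) A = subMP (RTree.node ts) := Iff.rfl
    rw [this, hcost A, hsub, (show ∀ a b : ℕ∞, M + a = M + b ↔ a = b from fun a b => (ENat.add_right_injective_of_ne_top hMne).eq_iff), Nat.cast_inj]
    have := hck A; have := hk_le_K A
    omega
  constructor
  · ext A
    simp only [Set.mem_setOf_eq]
    exact hup A
  · ext A
    simp only [Set.mem_setOf_eq]
    rw [hup A, hcost A, hsub, add_assoc]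
    have hc1 : ((n - K : ℕ) : ℕ∞) + 1 = ((n - K + 1 : ℕ) : ℕ∞) := by push_cast; ring
    rw [hc1, (show ∀ a b : ℕ∞, M + a = M + b ↔ a = b from fun a b => (ENat.add_right_injective_of_ne_top hMne).eq_iff), Nat.cast_inj]
    have := hck A; have := hk_le_K A
    omega
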